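/- For every connected simple graph G with at least three vertices, the incidence chromatic number satisfies Δ(G) + 1 ≤ χ_i(G) ≤ 3Δ(G) − 2, where Δ(G) is the maximum degree of G. -/

import Mathlib

set_option linter.unusedSectionVars false
set_option maxHeartbeats 1000000


/-- `(v, e)` is an incidence of the simple graph `G` when `e` is an edge of `G` and `v` is an
endpoint of `e`. -/
def IsIncidence {V : Type*} (G : SimpleGraph V) (v : V) (e : Sym2 V) : Prop :=
  e ∈ G.edgeSet ∧ v ∈ e

/-- Two incidences `(v, e)` and `(w, f)` are adjacent if `v = w`, or `e = f`, or the edge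
joining `v` and `w` is `e` or `f`. -/
def IncAdj {V : Type*} (v : V) (e : Sym2 V) (w : V) (f : Sym2 V) : Prop :=
  v = w ∨ e = f ∨ s(v, w) = e ∨ s(v, w) = f

/-- The incidence chromatic number of `G`: the least `k` such that `G` has a proper incidence
coloring using colors from `{0, …, k-1}`. -/
noncomputable def incChromaticNumber {V : Type*} (G : SimpleGraph V) : ℕ :=
  sInf {k | ∃ φ : V × Sym2 V → ℕ,
    (∀ v e, IsIncidence G v e → φ (v, e) < k) ∧
    (∀ v e w f, IsIncidence G v e → IsIncidence G w f → (v, e) ≠ (w, f) → IncAdj v e w f →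
      φ (v, e) ≠ φ (w, f))}

namespace IncAux

variable {V : Type*}

/-- Arc `(u, v)` (tail `u`, head `v`) corresponds to the incidence `(v, s(u,v))`.
Adjacency of two arcs as incidences. -/
def arcAdj (b a : V × V) : Prop :=
  IncAdj b.2 s(b.1, b.2) a.2 s(a.1, a.2)

instance [DecidableEq V] (b a : V × V) : Decidable (arcAdj b a) := by
  unfold arcAdj IncAdj; infer_instance

lemma arcAdj_symm {b a : V × V} (h : arcAdj b a) : arcAdj a b := by
  unfold arcAdj IncAdj at *
  rcases h with h | h | h | h
  · exact Or.inl h.symm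
  · exact Or.inr (Or.inl h.symm)
  · exact Or.inr (Or.inr (Or.inr (by rwa [Sym2.eq_swap] at h)))
  · exact Or.inr (Or.inr (Or.inl (by rwa [Sym2.eq_swap] at h)))

/-- The key (order) of an arc: arcs with tail `r` come first, then arcs grouped by head,
heads ordered by decreasing distance `d` (tie-broken by `ord`). -/
def akey [DecidableEq V] (n : ℕ) (d ord : V → ℕ) (r : V) (a : V × V) : ℕ :=
  if a.1 = r then ord a.2 else n + ((n - d a.2) * n + ord a.2) * n + ord a.1

section gcol

variable [Fintype V] [DecidableEq V] (G : SimpleGraph V) [DecidableRel G.Adj]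
  (r : V) (key : V × V → ℕ)

/-- The set of earlier arcs conflicting with `a`. -/
def earlier (a : V × V) : Finset (V × V) :=
  Finset.univ.filter (fun b : V × V => G.Adj b.1 b.2 ∧ key b < key a ∧ arcAdj b a)

/-- Greedy incidence coloring on arcs: all arcs with tail `r` get color 0; other arcs get
the least color not used by earlier conflicting arcs. -/
noncomputable def gcol (a : V × V) : ℕ :=
  if a.1 = r then 0
  else sInf {c : ℕ |
    c ∉ (earlier G key a).attach.image (fun b => gcol b.1)}
termination_by key a
decreasing_by
  have hb := b.2
  simp only [earlier, Finset.mem_filter] at hb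
  exact hb.2.2.1

/-- The forbidden color set for arc `a`. -/
noncomputable def forb (a : V × V) : Finset ℕ :=
  (earlier G key a).image (gcol G r key)

lemma gcol_eq {a : V × V} (h : a.1 ≠ r) :
    gcol G r key a = sInf {c : ℕ | c ∉ forb G r key a} := by
  rw [gcol, if_neg h]
  congr 1
  ext c
  simp [forb, Finset.mem_image, Finset.mem_attach]

lemma forb_nonempty_compl (a : V × V) : {c : ℕ | c ∉ forb G r key a}.Nonempty := by
  refine ⟨(forb G r key a).sup id + 1, fun hc => ?_⟩
  have h2 : id ((forb G r key a).sup id + 1) ≤ (forb G r key a).sup id :=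
    Finset.le_sup hc
  simp only [id] at h2
  omega

lemma gcol_not_mem_forb {a : V × V} (h : a.1 ≠ r) :
    gcol G r key a ∉ forb G r key a := by
  have := Nat.sInf_mem (forb_nonempty_compl G r key a)
  rw [← gcol_eq G r key h] at this
  exact this

lemma gcol_le {a : V × V} (h : a.1 ≠ r) {c : ℕ} (hc : c ∉ forb G r key a) :
    gcol G r key a ≤ c := by
  rw [gcol_eq G r key h]
  exact Nat.sInf_le hc

lemma gcol_tail_r {a : V × V} (h : a.1 = r) : gcol G r key a = 0 := by
  rw [gcol, if_pos h]

end gcol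

section keylemmas

lemma nat_grp_le {A B s t n : ℕ} (ht : t < n) (h : A * n + s ≤ B * n + t) : A ≤ B := by
  by_contra hc
  push_neg at hc
  have h1 : (B + 1) * n ≤ A * n := Nat.mul_le_mul_right n hc
  rw [add_one_mul] at h1
  omega

lemma nat_grp_eq {A B s t n : ℕ} (hs : s < n) (ht : t < n) (h : A * n + s = B * n + t) :
    A = B ∧ s = t := by
  have h1 : A ≤ B := nat_grp_le ht h.le
  have h2 : B ≤ A := nat_grp_le hs h.ge
  have h3 : A = B := le_antisymm h1 h2
  subst h3
  omega

variable [DecidableEq V] {n : ℕ} {d ord : V → ℕ} {r : V}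

/-- head key -/
def hkey (n : ℕ) (d ord : V → ℕ) (w : V) : ℕ := (n - d w) * n + ord w

lemma hkey_lt {w y : V} (hord : ∀ v, ord v < n) (hdy : d y ≤ n) (hwy : d w < d y) :
    hkey n d ord y < hkey n d ord w := by
  unfold hkey
  have h1 : n - d y + 1 ≤ n - d w := by omega
  have h2 : (n - d y + 1) * n ≤ (n - d w) * n := Nat.mul_le_mul_right n h1
  rw [add_one_mul] at h2
  have h3 := hord y
  omega

lemma akey_lt_of_tail_r (hord : ∀ v, ord v < n) {a : V × V} (h : a.1 = r) :
    akey n d ord r a < n := by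
  rw [akey, if_pos h]; exact hord a.2

lemma le_akey_of_tail_ne {a : V × V} (h : a.1 ≠ r) : n ≤ akey n d ord r a := by
  rw [akey, if_neg h]; omega

lemma akey_sep (hord : ∀ v, ord v < n) {a b : V × V} (ha : a.1 = r) (hb : b.1 ≠ r) :
    akey n d ord r a < akey n d ord r b :=
  lt_of_lt_of_le (akey_lt_of_tail_r hord ha) (le_akey_of_tail_ne hb)

lemma hkey_inj (hord : ∀ v, ord v < n) (hinj : Function.Injective ord) {x y : V}
    (h : hkey n d ord x = hkey n d ord y) : x = y := by
  unfold hkey at h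
  exact hinj (nat_grp_eq (hord x) (hord y) h).2

lemma akey_inj (hord : ∀ v, ord v < n) (hinj : Function.Injective ord) {a b : V × V}
    (h : akey n d ord r a = akey n d ord r b) : a = b := by
  by_cases ha : a.1 = r <;> by_cases hb : b.1 = r
  · simp only [akey, if_pos ha, if_pos hb] at h
    have := hinj h
    exact Prod.ext (ha.trans hb.symm) this
  · simp only [akey, if_pos ha, if_neg hb] at h
    have := hord a.2
    omega
  · simp only [akey, if_neg ha, if_pos hb] at h
    have := hord b.2
    omega
  · simp only [akey, if_neg ha, if_neg hb] at h
    have h' : ((n - d a.2) * n + ord a.2) * n + ord a.1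
        = ((n - d b.2) * n + ord b.2) * n + ord b.1 := by omega
    obtain ⟨h1, h2⟩ := nat_grp_eq (hord a.1) (hord b.1) h'
    obtain ⟨_, h3⟩ := nat_grp_eq (hord a.2) (hord b.2) h1
    exact Prod.ext (hinj h2) (hinj h3)

/-- comparing two non-root-tail arcs: head groups are ordered. -/
lemma akey_head_le (hord : ∀ v, ord v < n) {a b : V × V} (ha : a.1 ≠ r) (hb : b.1 ≠ r)
    (h : akey n d ord r b < akey n d ord r a) :
    hkey n d ord b.2 ≤ hkey n d ord a.2 := by
  simp only [akey, if_neg ha, if_neg hb] at h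
  unfold hkey
  exact nat_grp_le (hord a.1)
    (by omega : ((n - d b.2) * n + ord b.2) * n + ord b.1 ≤ ((n - d a.2) * n + ord a.2) * n + ord a.1)

end keylemmas

section valid

variable [Fintype V] [DecidableEq V] (G : SimpleGraph V) [DecidableRel G.Adj]
  (r : V) (key : V × V → ℕ)

lemma mem_earlier {a b : V × V} (hb : G.Adj b.1 b.2) (hk : key b < key a)
    (hadj : arcAdj b a) : b ∈ earlier G key a := by
  simp only [earlier, Finset.mem_filter, Finset.mem_univ, true_and]
  exact ⟨hb, hk, hadj⟩

/-- Two arcs with tail `r` are never conflicting. -/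
lemma not_arcAdj_root {a b : V × V} (ha : G.Adj a.1 a.2) (hb : G.Adj b.1 b.2)
    (har : a.1 = r) (hbr : b.1 = r) (hne : a ≠ b) : ¬ arcAdj b a := by
  intro hadj
  have hra : r ≠ a.2 := har ▸ G.ne_of_adj ha
  have hrb : r ≠ b.2 := hbr ▸ G.ne_of_adj hb
  have hne2 : b.2 ≠ a.2 := by
    intro h
    exact hne (Prod.ext (hbr.trans har.symm) h).symm
  rw [arcAdj, IncAdj, har, hbr] at hadj
  rcases hadj with h | h | h | h
  · exact hne2 h
  · rw [Sym2.congr_right] at h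
    exact hne2 h
  · rw [Sym2.eq_iff] at h
    rcases h with ⟨h1, h2⟩ | ⟨h1, h2⟩
    · exact hrb h1.symm
    · exact hra h2.symm
  · rw [Sym2.eq_iff] at h
    rcases h with ⟨h1, h2⟩ | ⟨h1, h2⟩
    · exact hrb h1.symm
    · exact hra h2.symm

lemma gcol_ne_of_key_lt
    (hsep : ∀ a b : V × V, a.1 = r → b.1 ≠ r → key a < key b)
    {a b : V × V} (ha : G.Adj a.1 a.2) (hb : G.Adj b.1 b.2) (hne : a ≠ b)
    (hadj : arcAdj b a) (hk : key b < key a) :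
    gcol G r key b ≠ gcol G r key a := by
  by_cases har : a.1 = r
  · -- then b.1 = r as well, contradiction with arcAdj
    have hbr : b.1 = r := by
      by_contra hbr
      exact absurd (hsep a b har hbr) (by omega)
    exact absurd hadj (not_arcAdj_root G r ha hb har hbr hne)
  · intro hcontra
    apply gcol_not_mem_forb G r key har
    rw [← hcontra]
    exact Finset.mem_image_of_mem _ (mem_earlier G key hb hk hadj)

lemma gcol_valid
    (hinj : ∀ a b : V × V, key a = key b → a = b)
    (hsep : ∀ a b : V × V, a.1 = r → b.1 ≠ r → key a < key b)
    {a b : V × V} (ha : G.Adj a.1 a.2) (hb : G.Adj b.1 b.2) (hne : a ≠ b)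
    (hadj : arcAdj b a) :
    gcol G r key b ≠ gcol G r key a := by
  rcases lt_trichotomy (key b) (key a) with h | h | h
  · exact gcol_ne_of_key_lt G r key hsep ha hb hne hadj h
  · exact absurd (hinj b a h) (fun h' => hne h'.symm)
  · exact (gcol_ne_of_key_lt G r key hsep hb ha (fun h' => hne h'.symm)
      (arcAdj_symm hadj) h).symm

end valid

section count

variable [Fintype V] [DecidableEq V] (G : SimpleGraph V) [DecidableRel G.Adj]
  (r : V) (key : V × V → ℕ)

lemma earlier_subset {a : V × V} (ha : G.Adj a.1 a.2) :
    earlier G key a ⊆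
      ((G.neighborFinset a.2).erase a.1).image (fun x => (x, a.2)) ∪
      (G.neighborFinset a.1).image (fun x => (x, a.1)) ∪
      ((G.neighborFinset a.2).erase a.1).image (fun w => (a.2, w)) := by
  obtain ⟨u, v⟩ := a
  intro b hb
  obtain ⟨x, y⟩ := b
  simp only [earlier, Finset.mem_filter, Finset.mem_univ, true_and] at hb
  obtain ⟨hAdj, hk, hadj⟩ := hb
  rw [arcAdj, IncAdj] at hadj
  dsimp only at ha hAdj hadj ⊢
  have hba : (x, y) ≠ (u, v) := by
    intro h
    rw [h] at hk
    exact lt_irrefl _ hk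
  have huv : u ≠ v := G.ne_of_adj ha
  have hxy : x ≠ y := G.ne_of_adj hAdj
  simp only [Finset.mem_union, Finset.mem_image, Finset.mem_erase,
    SimpleGraph.mem_neighborFinset, Prod.mk.injEq]
  rcases hadj with h | h | h | h
  · -- y = v
    subst h
    have hxu : x ≠ u := by
      intro h; exact hba (by rw [h])
    exact Or.inl (Or.inl ⟨x, ⟨hxu, hAdj.symm⟩, rfl, rfl⟩)
  · -- s(x,y) = s(u,v)
    rw [Sym2.eq_iff] at h
    rcases h with ⟨h1, h2⟩ | ⟨h1, h2⟩
    · exact absurd (by rw [h1, h2]) hba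
    · refine Or.inl (Or.inr ⟨x, ?_, rfl, h2.symm⟩)
      rw [h1]; exact ha
  · -- s(y,v) = s(x,y)
    rw [Sym2.eq_iff] at h
    rcases h with ⟨h1, h2⟩ | ⟨h1, h2⟩
    · exact absurd h1.symm hxy
    · -- v = x
      subst h2
      by_cases hyu : y = u
      · subst hyu
        exact Or.inl (Or.inr ⟨v, ha, rfl, rfl⟩)
      · exact Or.inr ⟨y, ⟨hyu, hAdj⟩, rfl, rfl⟩
  · -- s(y,v) = s(u,v)
    rw [Sym2.eq_iff] at h
    rcases h with ⟨h1, h2⟩ | ⟨h1, h2⟩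
    · subst h1
      exact Or.inl (Or.inr ⟨x, hAdj.symm, rfl, rfl⟩)
    · exact absurd h2.symm huv

lemma card_forb_le {n : ℕ} {d ord : V → ℕ} {r : V}
    (hmd : 2 ≤ G.maxDegree)
    (hord : ∀ v, ord v < n) (hinj : Function.Injective ord)
    (hdn : ∀ v, d v ≤ n)
    (hstep : ∀ v, v ≠ r → ∃ w, G.Adj v w ∧ d w < d v)
    {a : V × V} (ha : G.Adj a.1 a.2) (har : a.1 ≠ r) :
    (forb G r (akey n d ord r) a).card ≤ 3 * G.maxDegree - 3 := by
  obtain ⟨u, v⟩ := a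
  dsimp only at ha har
  set key := akey n d ord r with hkeydef
  set E1 : Finset (V × V) := ((G.neighborFinset v).erase u).image (fun x => (x, v)) with hE1
  set E2 : Finset (V × V) := (G.neighborFinset u).image (fun x => (x, u)) with hE2
  set E3 : Finset (V × V) := ((G.neighborFinset v).erase u).image (fun w => (v, w)) with hE3
  have hsub : earlier G key (u, v) ⊆ E1 ∪ E2 ∪ E3 := earlier_subset G key ha
  have humem : u ∈ (G.neighborFinset v).erase u → False := fun h => (Finset.mem_erase.mp h).1 rfl
  have humem' : u ∈ G.neighborFinset v := (SimpleGraph.mem_neighborFinset _ _ _).mpr ha.symm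
  have hdegv : ((G.neighborFinset v).erase u).card = G.degree v - 1 := by
    rw [Finset.card_erase_of_mem humem']
    rfl
  have hE1card : E1.card ≤ G.degree v - 1 := by
    rw [hE1, ← hdegv]; exact Finset.card_image_le
  have hE2card : E2.card ≤ G.degree u := by
    rw [hE2]
    exact le_trans Finset.card_image_le (le_of_eq rfl)
  have hE3card : E3.card ≤ G.degree v - 1 := by
    rw [hE3, ← hdegv]; exact Finset.card_image_le
  have hdvM := G.degree_le_maxDegree v
  have hduM := G.degree_le_maxDegree u
  have hdegv1 : 1 ≤ G.degree v := by
    rw [← SimpleGraph.card_neighborFinset_eq_degree]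
    exact Finset.card_pos.mpr ⟨u, humem'⟩
  by_cases hvr : v = r
  · -- head is the root: the out-arcs of the root all have color 0
    have himg : forb G r key (u, v) ⊆
        E1.image (gcol G r key) ∪ E2.image (gcol G r key) := by
      intro c hc
      rw [forb, Finset.mem_image] at hc
      obtain ⟨b, hbmem, rfl⟩ := hc
      rcases Finset.mem_union.mp (hsub hbmem) with hb' | hb'
      · rcases Finset.mem_union.mp hb' with hb'' | hb''
        · exact Finset.mem_union_left _ (Finset.mem_image_of_mem _ hb'')
        · exact Finset.mem_union_right _ (Finset.mem_image_of_mem _ hb'')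
      · -- b is an out-arc of the root, so its color is 0
        rw [hE3, Finset.mem_image] at hb'
        obtain ⟨w, hw, rfl⟩ := hb'
        have h0 : gcol G r key (v, w) = 0 := gcol_tail_r G r key hvr
        rw [h0]
        apply Finset.mem_union_right
        rw [Finset.mem_image]
        refine ⟨(r, u), ?_, gcol_tail_r G r key rfl⟩
        rw [hE2, Finset.mem_image]
        exact ⟨r, (SimpleGraph.mem_neighborFinset _ _ _).mpr (hvr ▸ ha), rfl⟩
    calc (forb G r key (u, v)).card
        ≤ (E1.image (gcol G r key) ∪ E2.image (gcol G r key)).card :=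
          Finset.card_le_card himg
      _ ≤ (E1.image (gcol G r key)).card + (E2.image (gcol G r key)).card :=
          Finset.card_union_le _ _
      _ ≤ E1.card + E2.card := add_le_add Finset.card_image_le Finset.card_image_le
      _ ≤ 3 * G.maxDegree - 3 := by omega
  · -- head not the root: it has a neighbor strictly closer to the root
    obtain ⟨ws, hwsadj, hwsd⟩ := hstep v hvr
    have hkvw : hkey n d ord v < hkey n d ord ws := hkey_lt hord (hdn v) hwsd
    rcases lt_trichotomy (hkey n d ord u) (hkey n d ord v) with hB | hB | hB
    · -- u's group comes before v's group
      have hwsu : u ≠ ws := by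
        intro h
        rw [← h] at hkvw
        omega
      have hwsm : ws ∈ (G.neighborFinset v).erase u :=
        Finset.mem_erase.mpr ⟨fun h => hwsu h.symm, (SimpleGraph.mem_neighborFinset _ _ _).mpr hwsadj⟩
      set E3' : Finset (V × V) :=
        (((G.neighborFinset v).erase u).erase ws).image (fun w => (v, w)) with hE3'
      have hsub' : earlier G key (u, v) ⊆ E1 ∪ E2 ∪ E3' := by
        intro b hb
        have hkb : key b < key (u, v) := by
          simp only [earlier, Finset.mem_filter] at hb
          exact hb.2.2.1
        rcases Finset.mem_union.mp (hsub hb) with hb' | hb'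
        · exact Finset.mem_union_left _ hb'
        · rw [hE3, Finset.mem_image] at hb'
          obtain ⟨w, hw, rfl⟩ := hb'
          have hwne : w ≠ ws := by
            intro h
            subst h
            have := akey_head_le hord (har : (u, v).1 ≠ r) (hvr : ((v, w) : V × V).1 ≠ r) hkb
            dsimp only at this
            omega
          apply Finset.mem_union_right
          rw [hE3', Finset.mem_image]
          exact ⟨w, Finset.mem_erase.mpr ⟨hwne, hw⟩, rfl⟩
      have hE3'card : E3'.card ≤ G.degree v - 1 - 1 := by
        rw [hE3']
        refine le_trans Finset.card_image_le ?_
        rw [Finset.card_erase_of_mem hwsm, hdegv]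
      calc (forb G r key (u, v)).card
          ≤ ((E1 ∪ E2 ∪ E3').image (gcol G r key)).card :=
            Finset.card_le_card (Finset.image_subset_image hsub')
        _ ≤ (E1 ∪ E2 ∪ E3').card := Finset.card_image_le
        _ ≤ E1.card + E2.card + E3'.card :=
            le_trans (Finset.card_union_le _ _) (by
              have := Finset.card_union_le E1 E2
              omega)
        _ ≤ 3 * G.maxDegree - 3 := by omega
    · -- impossible: u ≠ v
      exact absurd (hkey_inj hord hinj hB) (G.ne_of_adj ha)
    · -- v's group comes before u's group: only the root in-arc of u can be earlier
      have hsub' : earlier G key (u, v) ⊆ E1 ∪ {(r, u)} ∪ E3 := by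
        intro b hb
        have hkb : key b < key (u, v) := by
          simp only [earlier, Finset.mem_filter] at hb
          exact hb.2.2.1
        rcases Finset.mem_union.mp (hsub hb) with hb' | hb'
        · rcases Finset.mem_union.mp hb' with hb'' | hb''
          · exact Finset.mem_union_left _ (Finset.mem_union_left _ hb'')
          · rw [hE2, Finset.mem_image] at hb''
            obtain ⟨x, hx, rfl⟩ := hb''
            have hxr : x = r := by
              by_contra hxr
              have := akey_head_le hord (har : ((u, v) : V × V).1 ≠ r)
                (hxr : ((x, u) : V × V).1 ≠ r) hkb
              dsimp only at this
              omega
            subst hxr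
            exact Finset.mem_union_left _ (Finset.mem_union_right _ (Finset.mem_singleton_self _))
        · exact Finset.mem_union_right _ hb'
      calc (forb G r key (u, v)).card
          ≤ ((E1 ∪ {(r, u)} ∪ E3).image (gcol G r key)).card :=
            Finset.card_le_card (Finset.image_subset_image hsub')
        _ ≤ (E1 ∪ {(r, u)} ∪ E3).card := Finset.card_image_le
        _ ≤ E1.card + 1 + E3.card :=
            le_trans (Finset.card_union_le _ _) (by
              have := Finset.card_union_le E1 ({(r, u)} : Finset (V × V))
              have : ({(r, u)} : Finset (V × V)).card = 1 := Finset.card_singleton _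
              omega)
        _ ≤ 3 * G.maxDegree - 3 := by omega

lemma gcol_lt {n : ℕ} {d ord : V → ℕ} {r : V}
    (hmd : 2 ≤ G.maxDegree)
    (hord : ∀ v, ord v < n) (hinj : Function.Injective ord)
    (hdn : ∀ v, d v ≤ n)
    (hstep : ∀ v, v ≠ r → ∃ w, G.Adj v w ∧ d w < d v)
    {a : V × V} (ha : G.Adj a.1 a.2) :
    gcol G r (akey n d ord r) a < 3 * G.maxDegree - 2 := by
  have h4 : 4 ≤ 3 * G.maxDegree - 2 := by omega
  by_cases har : a.1 = r
  · rw [gcol_tail_r G r _ har]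
    omega
  · have hcard := card_forb_le G hmd hord hinj hdn hstep ha har
    have hex : ∃ c ∈ Finset.range (3 * G.maxDegree - 2),
        c ∉ forb G r (akey n d ord r) a := by
      by_contra h
      push_neg at h
      have hsub : Finset.range (3 * G.maxDegree - 2) ⊆ forb G r (akey n d ord r) a :=
        fun c hc => h c hc
      have := Finset.card_le_card hsub
      rw [Finset.card_range] at this
      omega
    obtain ⟨c, hcr, hcf⟩ := hex
    have := gcol_le G r _ har hcf
    rw [Finset.mem_range] at hcr
    omega

end count

section misc

variable [Fintype V] [DecidableEq V] (G : SimpleGraph V) [DecidableRel G.Adj]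

lemma two_le_maxDegree (hconn : G.Connected) (hcard : 3 ≤ Fintype.card V) :
    2 ≤ G.maxDegree := by
  by_contra hc
  push_neg at hc
  have hdeg : ∀ w, G.degree w ≤ 1 := fun w => le_trans (G.degree_le_maxDegree w) (by omega)
  have key : ∀ w x y : V, G.Adj w x → G.Adj w y → x = y := by
    intro w x y hx hy
    have h1 := hdeg w
    rw [← SimpleGraph.card_neighborFinset_eq_degree] at h1
    exact Finset.card_le_one.mp h1 x ((SimpleGraph.mem_neighborFinset _ _ _).mpr hx) y
      ((SimpleGraph.mem_neighborFinset _ _ _).mpr hy)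
  obtain ⟨x, y, hxy⟩ := Fintype.exists_pair_of_one_lt_card (by omega : 1 < Fintype.card V)
  obtain ⟨c, hac⟩ : ∃ c, G.Adj x c := by
    obtain ⟨p⟩ := hconn x y
    cases p with
    | nil => exact absurd rfl hxy
    | cons h q => exact ⟨_, h⟩
  obtain ⟨z, hzx, hzc⟩ : ∃ z : V, z ≠ x ∧ z ≠ c := by
    by_contra h
    push_neg at h
    have hsub : (Finset.univ : Finset V) ⊆ {x, c} := by
      intro z _
      rcases eq_or_ne z x with h' | h'
      · simp [h']
      · simp [h z h']
    have h1 := Finset.card_le_card hsub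
    have h2 : ({x, c} : Finset V).card ≤ 2 :=
      le_trans (Finset.card_insert_le _ _) (by simp)
    rw [Finset.card_univ] at h1
    omega
  obtain ⟨q0⟩ := hconn x z
  obtain ⟨p, hp⟩ := q0.toPath
  cases p with
  | nil => exact hzx rfl
  | cons h q =>
    rename_i u1
    cases q with
    | nil => exact hzc (key x z c h hac)
    | cons h' q' =>
      rename_i t
      rw [SimpleGraph.Walk.cons_isPath_iff] at hp
      have hxt : x ≠ t := by
        intro heq
        apply hp.2
        rw [SimpleGraph.Walk.support_cons]
        exact List.mem_cons_of_mem _ (heq ▸ q'.start_mem_support)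
      exact hxt (key u1 x t h.symm h')

lemma dist_le_card (hconn : G.Connected) (r w : V) :
    G.dist w r ≤ Fintype.card V := by
  obtain ⟨p⟩ := hconn w r
  have h1 := SimpleGraph.dist_le (p.toPath : G.Walk w r)
  have h2 := p.toPath.2.length_lt
  omega

lemma exists_adj_dist_lt (hconn : G.Connected) (r : V) :
    ∀ v, v ≠ r → ∃ w, G.Adj v w ∧ G.dist w r < G.dist v r := by
  intro v hvr
  obtain ⟨p, hp⟩ := (hconn v r).exists_walk_length_eq_dist
  cases p with
  | nil => exact absurd rfl hvr
  | cons h q =>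
    rename_i w
    refine ⟨w, h, ?_⟩
    have := SimpleGraph.dist_le q
    rw [SimpleGraph.Walk.length_cons] at hp
    omega

lemma isIncidence_iff {G : SimpleGraph V} {v : V} {e : Sym2 V} :
    IsIncidence G v e ↔ ∃ u, G.Adj u v ∧ e = s(u, v) := by
  constructor
  · rintro ⟨he, hv⟩
    induction e with
    | _ α β =>
      rw [SimpleGraph.mem_edgeSet] at he
      rcases Sym2.mem_iff.mp hv with h | h
      · subst h
        exact ⟨β, he.symm, Sym2.eq_swap⟩
      · subst h
        exact ⟨α, he, rfl⟩
  · rintro ⟨u, hadj, rfl⟩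
    exact ⟨(G.mem_edgeSet).mpr hadj, Sym2.mem_mk_right u v⟩

end misc

end IncAux

theorem incChromaticNumber_bounds {V : Type*} [Fintype V] (G : SimpleGraph V)
    [DecidableRel G.Adj] (hconn : G.Connected) (hcard : 3 ≤ Fintype.card V) :
    G.maxDegree + 1 ≤ incChromaticNumber G ∧
    incChromaticNumber G ≤ 3 * G.maxDegree - 2 := by
  letI : DecidableEq V := Classical.decEq V
  have hne : Nonempty V := Fintype.card_pos_iff.mp (by omega)
  obtain ⟨r⟩ := hne
  have hmd : 2 ≤ G.maxDegree := IncAux.two_le_maxDegree G hconn hcard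
  -- set up the greedy coloring data
  set n := Fintype.card V with hn
  set d : V → ℕ := fun w => G.dist w r with hd
  set ord : V → ℕ := fun w => (Fintype.equivFin V w : ℕ) with hordd
  have hord : ∀ v, ord v < n := fun v => (Fintype.equivFin V v).isLt
  have hinj : Function.Injective ord := fun a b h =>
    (Fintype.equivFin V).injective (Fin.ext h)
  have hdn : ∀ v, d v ≤ n := fun v => IncAux.dist_le_card G hconn r v
  have hstep : ∀ v, v ≠ r → ∃ w, G.Adj v w ∧ d w < d v :=
    IncAux.exists_adj_dist_lt G hconn r
  set key : V × V → ℕ := IncAux.akey n d ord r with hkey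
  have hkeyinj : ∀ a b : V × V, key a = key b → a = b :=
    fun a b h => IncAux.akey_inj hord hinj h
  have hkeysep : ∀ a b : V × V, a.1 = r → b.1 ≠ r → key a < key b :=
    fun a b h1 h2 => IncAux.akey_sep hord h1 h2
  -- the coloring
  set φ : V × Sym2 V → ℕ := fun p =>
    if h : ∃ u, G.Adj u p.1 ∧ p.2 = s(u, p.1) then IncAux.gcol G r key (h.choose, p.1)
    else 0 with hφ
  have hmem : (3 * G.maxDegree - 2) ∈ {k | ∃ φ : V × Sym2 V → ℕ,
      (∀ v e, IsIncidence G v e → φ (v, e) < k) ∧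
      (∀ v e w f, IsIncidence G v e → IsIncidence G w f → (v, e) ≠ (w, f) → IncAdj v e w f →
        φ (v, e) ≠ φ (w, f))} := by
    refine ⟨φ, ?_, ?_⟩
    · intro v e hinc
      have hex : ∃ u, G.Adj u v ∧ e = s(u, v) := IncAux.isIncidence_iff.mp hinc
      rw [hφ]
      dsimp only
      rw [dif_pos hex]
      exact IncAux.gcol_lt G hmd hord hinj hdn hstep hex.choose_spec.1
    · intro v e w f hi1 hi2 hnepair hadj
      have hex1 : ∃ u, G.Adj u v ∧ e = s(u, v) := IncAux.isIncidence_iff.mp hi1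
      have hex2 : ∃ u, G.Adj u w ∧ f = s(u, w) := IncAux.isIncidence_iff.mp hi2
      rw [hφ]
      dsimp only
      rw [dif_pos hex1, dif_pos hex2]
      obtain ⟨hadj1, he1⟩ := hex1.choose_spec
      obtain ⟨hadj2, he2⟩ := hex2.choose_spec
      refine IncAux.gcol_valid G r key hkeyinj hkeysep
        (a := (hex2.choose, w)) (b := (hex1.choose, v)) hadj2 hadj1 ?_ ?_
      · intro heq
        rw [Prod.mk.injEq] at heq
        apply hnepair
        rw [Prod.mk.injEq]
        exact ⟨heq.2.symm, by rw [he1, he2, heq.1, heq.2]⟩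
      · show IncAdj v s(hex1.choose, v) w s(hex2.choose, w)
        rw [← he1, ← he2]
        exact hadj
  constructor
  · -- lower bound
    refine le_csInf ⟨_, hmem⟩ ?_
    rintro k ⟨ψ, hψ1, hψ2⟩
    haveI : Nonempty V := ⟨r⟩
    obtain ⟨v, hv⟩ := G.exists_maximal_degree_vertex
    have hdv : 2 ≤ G.degree v := hv ▸ hmd
    obtain ⟨u, hu⟩ : ∃ u, G.Adj v u := (G.degree_pos_iff_exists_adj v).mp (by omega)
    set S0 : Finset (V × Sym2 V) :=
      insert (u, s(u, v)) ((G.neighborFinset v).image (fun x => (v, s(x, v)))) with hS0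
    have hinc : ∀ p ∈ S0, IsIncidence G p.1 p.2 := by
      intro p hp
      rw [hS0, Finset.mem_insert] at hp
      rcases hp with h | h
      · subst h
        exact IncAux.isIncidence_iff.mpr ⟨v, hu, Sym2.eq_swap.symm⟩
      · rw [Finset.mem_image] at h
        obtain ⟨x, hx, rfl⟩ := h
        rw [SimpleGraph.mem_neighborFinset] at hx
        exact IncAux.isIncidence_iff.mpr ⟨x, hx.symm, rfl⟩
    have hvu : v ≠ u := G.ne_of_adj hu
    have hadjpair : ∀ p ∈ S0, ∀ q ∈ S0, p ≠ q → IncAdj p.1 p.2 q.1 q.2 := by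
      intro p hp q hq hpq
      rw [hS0, Finset.mem_insert] at hp hq
      rcases hp with hp | hp <;> rcases hq with hq | hq
      · exact absurd (hp.trans hq.symm) hpq
      · subst hp
        rw [Finset.mem_image] at hq
        obtain ⟨x, hx, rfl⟩ := hq
        exact Or.inr (Or.inr (Or.inl rfl))
      · subst hq
        rw [Finset.mem_image] at hp
        obtain ⟨x, hx, rfl⟩ := hp
        exact Or.inr (Or.inr (Or.inr Sym2.eq_swap))
      · rw [Finset.mem_image] at hp hq
        obtain ⟨x, hx, rfl⟩ := hp
        obtain ⟨x', hx', rfl⟩ := hq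
        exact Or.inl rfl
    have hcard0 : S0.card = G.degree v + 1 := by
      rw [hS0, Finset.card_insert_of_notMem, Finset.card_image_of_injOn]
      · rfl
      · intro x hx x' hx' hxx
        rw [Prod.mk.injEq] at hxx
        rw [Finset.mem_coe, SimpleGraph.mem_neighborFinset] at hx hx'
        exact Sym2.congr_left.mp hxx.2
      · intro hmem'
        rw [Finset.mem_image] at hmem'
        obtain ⟨x, hx, hx2⟩ := hmem'
        rw [Prod.mk.injEq] at hx2
        exact hvu hx2.1
    have hle : S0.card ≤ (Finset.range k).card := by
      apply Finset.card_le_card_of_injOn ψ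
      · intro p hp
        rw [Finset.mem_coe, Finset.mem_range]
        have := hψ1 p.1 p.2 (hinc p hp)
        rwa [Prod.mk.eta] at this
      · intro p hp q hq hψeq
        by_contra hpq
        apply hψ2 p.1 p.2 q.1 q.2 (hinc p hp) (hinc q hq)
          (by rwa [Prod.mk.eta, Prod.mk.eta]) (hadjpair p hp q hq hpq)
        rwa [Prod.mk.eta, Prod.mk.eta]
    rw [Finset.card_range, hcard0] at hle
    omega
  · exact Nat.sInf_le hmem
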